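/- Let e be a squarefree positive integer, t an integer whose residue class modulo e has multiplicative order d in (ℤ/eℤ)ˣ, and set α_j = gcd(e, t^j − 1). Fix a positive integer a ≤ d and a nonempty finite set J = {j₁, …, j_m} of positive integers. Then the number of residues b ∈ ℤ/eℤ such that α_a / gcd(α_a, α_j) divides b for every j ∈ J equals e · α_{gcd(a, j₁, …, j_m)} / α_a. -/

import Mathlib

/-- `α s = gcd (e, t^s - 1)`. -/
def alphaSeq (e : ℕ) (t : ℤ) (s : ℕ) : ℕ := Int.gcd (e : ℤ) (t ^ s - 1)

private lemma pow_cast_eq_one_iff (N : ℕ) (t : ℤ) (x : ℕ) :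
    (t : ZMod N) ^ x = 1 ↔ (N : ℤ) ∣ t ^ x - 1 := by
  rw [← ZMod.intCast_zmod_eq_zero_iff_dvd, Int.cast_sub, Int.cast_pow, Int.cast_one,
    sub_eq_zero]

private lemma dvd_pow_gcd_sub_one {N : ℕ} {t : ℤ} {x y : ℕ}
    (hx : (N : ℤ) ∣ t ^ x - 1) (hy : (N : ℤ) ∣ t ^ y - 1) :
    (N : ℤ) ∣ t ^ Nat.gcd x y - 1 := by
  rw [← pow_cast_eq_one_iff] at hx hy ⊢
  exact orderOf_dvd_iff_pow_eq_one.mp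
    (Nat.dvd_gcd (orderOf_dvd_of_pow_eq_one hx) (orderOf_dvd_of_pow_eq_one hy))

private lemma alphaSeq_dvd (e : ℕ) (t : ℤ) (s : ℕ) : alphaSeq e t s ∣ e :=
  Int.natCast_dvd_natCast.mp (Int.gcd_dvd_left _ _)

private lemma alphaSeq_dvd_sub (e : ℕ) (t : ℤ) (s : ℕ) :
    ((alphaSeq e t s : ℕ) : ℤ) ∣ t ^ s - 1 := Int.gcd_dvd_right _ _

private lemma alphaSeq_pos (e : ℕ) (he : 0 < e) (t : ℤ) (s : ℕ) : 0 < alphaSeq e t s := by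
  rcases Nat.eq_zero_or_pos (alphaSeq e t s) with h | h
  · exfalso
    have h2 : alphaSeq e t s ∣ e := alphaSeq_dvd e t s
    rw [h] at h2
    simp [Nat.eq_zero_of_zero_dvd h2] at he
  · exact h

private lemma alphaSeq_mono (e : ℕ) (t : ℤ) {x y : ℕ} (h : x ∣ y) :
    alphaSeq e t x ∣ alphaSeq e t y := by
  obtain ⟨k, rfl⟩ := h
  refine Int.natCast_dvd_natCast.mp (Int.dvd_coe_gcd (Int.gcd_dvd_left _ _) ?_)
  have h1 : ((alphaSeq e t x : ℕ) : ℤ) ∣ t ^ x - 1 := Int.gcd_dvd_right _ _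
  have h2 : (t ^ x - 1 : ℤ) ∣ t ^ (x * k) - 1 := by
    have := sub_dvd_pow_sub_pow (t ^ x) 1 k
    simpa [pow_mul] using this
  exact h1.trans h2

private lemma alphaSeq_gcd (e : ℕ) (t : ℤ) (x y : ℕ) :
    Nat.gcd (alphaSeq e t x) (alphaSeq e t y) = alphaSeq e t (Nat.gcd x y) := by
  apply Nat.dvd_antisymm
  · have hNe : ((Nat.gcd (alphaSeq e t x) (alphaSeq e t y) : ℕ) : ℤ) ∣ (e : ℤ) :=
      Int.natCast_dvd_natCast.mpr ((Nat.gcd_dvd_left _ _).trans (alphaSeq_dvd e t x))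
    have hNx : ((Nat.gcd (alphaSeq e t x) (alphaSeq e t y) : ℕ) : ℤ) ∣ t ^ x - 1 :=
      (Int.natCast_dvd_natCast.mpr (Nat.gcd_dvd_left _ _)).trans (alphaSeq_dvd_sub e t x)
    have hNy : ((Nat.gcd (alphaSeq e t x) (alphaSeq e t y) : ℕ) : ℤ) ∣ t ^ y - 1 :=
      (Int.natCast_dvd_natCast.mpr (Nat.gcd_dvd_right _ _)).trans (alphaSeq_dvd_sub e t y)
    exact Int.natCast_dvd_natCast.mp (Int.dvd_coe_gcd hNe (dvd_pow_gcd_sub_one hNx hNy))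
  · exact Nat.dvd_gcd (alphaSeq_mono e t (Nat.gcd_dvd_left x y))
      (alphaSeq_mono e t (Nat.gcd_dvd_right x y))


private lemma dvd_of_squarefree_of_prime_dvd {L n : ℕ} (hL : Squarefree L)
    (h : ∀ p, p.Prime → p ∣ L → p ∣ n) : L ∣ n := by
  rcases eq_or_ne n 0 with rfl | hn
  · exact dvd_zero L
  rw [← Nat.factorization_le_iff_dvd hL.ne_zero hn]
  intro p
  rcases Nat.eq_zero_or_pos (L.factorization p) with h0 | hpos
  · simp [h0]
  · have hpL : p ∣ L := Nat.dvd_of_factorization_pos hpos.ne'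
    have hp : p.Prime := Nat.prime_of_mem_primeFactors
      (Nat.support_factorization L ▸ Finsupp.mem_support_iff.mpr hpos.ne')
    have h1 : L.factorization p ≤ 1 := hL.natFactorization_le_one p
    have h2 : 1 ≤ n.factorization p := (hp.factorization_pos_of_dvd hn (h p hp hpL))
    omega

private lemma zmod_natCast_dvd {e : ℕ} [NeZero e] {m : ℕ} (hm : m ∣ e) (b : ZMod e) :
    ((m : ℕ) : ZMod e) ∣ b ↔ m ∣ b.val := by
  constructor
  · rintro ⟨c, rfl⟩
    rw [ZMod.val_mul, ZMod.val_natCast]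
    exact (Nat.dvd_mod_iff hm).mpr (Dvd.dvd.mul_right ((Nat.dvd_mod_iff hm).mpr dvd_rfl) _)
  · rintro ⟨c, hc⟩
    refine ⟨(c : ZMod e), ?_⟩
    rw [← ZMod.natCast_rightInverse b, hc]
    push_cast
    ring

private lemma nat_div_dvd_div {A x y : ℕ} (hx : x ∣ A) (hy : y ∣ x) (hx0 : 0 < x) :
    A / x ∣ A / y := by
  obtain ⟨k, rfl⟩ := hy
  obtain ⟨m, rfl⟩ := hx
  have hy0 : 0 < y := Nat.pos_of_ne_zero fun h => by subst h; simp at hx0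
  rw [Nat.mul_div_cancel_left m hx0, mul_assoc, Nat.mul_div_cancel_left (k * m) hy0]
  exact dvd_mul_left m k

private lemma card_val_dvd (e L : ℕ) (he : 0 < e) (hL : L ∣ e) :
    Nat.card {b : ZMod e // L ∣ b.val} = e / L := by
  haveI : NeZero e := ⟨he.ne'⟩
  have hL0 : 0 < L := Nat.pos_of_ne_zero fun h => by
    subst h; simp [Nat.eq_zero_of_zero_dvd hL] at he
  have key : ∀ k : ℕ, k < e / L → L * k < e := fun k hk => by
    calc L * k < L * (e / L) := (Nat.mul_lt_mul_left hL0).mpr hk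
      _ = e := Nat.mul_div_cancel' hL
  have e1 : {b : ZMod e // L ∣ b.val} ≃ Fin (e / L) :=
    { toFun := fun b => ⟨b.1.val / L, Nat.div_lt_div_of_lt_of_dvd hL (ZMod.val_lt b.1)⟩
      invFun := fun k => ⟨((L * k.val : ℕ) : ZMod e), by
        rw [ZMod.val_natCast, Nat.mod_eq_of_lt (key k.val k.isLt)]
        exact Dvd.intro _ rfl⟩
      left_inv := fun b => Subtype.ext (by
        show ((L * (b.1.val / L) : ℕ) : ZMod e) = b.1
        rw [Nat.mul_div_cancel' b.2]
        exact ZMod.natCast_rightInverse b.1)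
      right_inv := fun k => by
        apply Fin.ext
        simp only [ZMod.val_natCast, Nat.mod_eq_of_lt (key k.val k.isLt),
          Nat.mul_div_cancel_left _ hL0] }
  rw [Nat.card_congr e1, Nat.card_eq_fintype_card, Fintype.card_fin]

theorem card_residues_divisible (e d : ℕ) (he : 0 < e) (hsq : Squarefree e) (t : ℤ)
    (u : (ZMod e)ˣ) (hu : (u : ZMod e) = (t : ZMod e)) (hord : orderOf u = d)
    (a : ℕ) (ha : 0 < a) (had : a ≤ d) (J : Finset ℕ) (hJ : J.Nonempty)
    (hJpos : ∀ j ∈ J, 0 < j) :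
    Nat.card {b : ZMod e // ∀ j ∈ J,
        ((alphaSeq e t a / Nat.gcd (alphaSeq e t a) (alphaSeq e t j) : ℕ) : ZMod e) ∣ b}
      = e * alphaSeq e t (Nat.gcd a (J.gcd id)) / alphaSeq e t a := by
  haveI : NeZero e := ⟨he.ne'⟩
  set g : ℕ := Nat.gcd a (J.gcd id) with hg
  have hGA : alphaSeq e t g ∣ alphaSeq e t a := alphaSeq_mono e t (Nat.gcd_dvd_left a _)
  have hAe : alphaSeq e t a ∣ e := alphaSeq_dvd e t a
  have hGpos : 0 < alphaSeq e t g := alphaSeq_pos e he t g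
  have hApos : 0 < alphaSeq e t a := alphaSeq_pos e he t a
  set A := alphaSeq e t a with hA
  set G := alphaSeq e t g with hGdef
  set L := A / G with hL
  have hLG : L * G = A := Nat.div_mul_cancel hGA
  have hLA : L ∣ A := ⟨G, hLG.symm⟩
  have hLe : L ∣ e := hLA.trans hAe
  have key : ∀ b : ZMod e,
      (∀ j ∈ J, ((A / Nat.gcd A (alphaSeq e t j) : ℕ) : ZMod e) ∣ b) ↔ L ∣ b.val := by
    intro b
    constructor
    · intro h
      apply dvd_of_squarefree_of_prime_dvd (hsq.squarefree_of_dvd hLe)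
      intro p hp hpL
      have hpA : p ∣ A := hpL.trans hLA
      have hpG : ¬ p ∣ G := by
        intro hpG
        exact hp.not_isUnit (hsq p (((mul_dvd_mul hpL hpG).trans (dvd_of_eq hLG)).trans hAe))
      have hpe : p ∣ e := hpA.trans hAe
      have hpa : ((p : ℕ) : ℤ) ∣ t ^ a - 1 :=
        (Int.natCast_dvd_natCast.mpr hpA).trans (alphaSeq_dvd_sub e t a)
      have hex : ∃ j ∈ J, ¬ ((p : ℕ) : ℤ) ∣ t ^ j - 1 := by
        by_contra hc
        push_neg at hc
        have h1 : ∀ j ∈ J, orderOf ((t : ZMod p)) ∣ id j := fun j hj =>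
          orderOf_dvd_of_pow_eq_one ((pow_cast_eq_one_iff p t j).mpr (hc j hj))
        have h2 : orderOf ((t : ZMod p)) ∣ J.gcd id := Finset.dvd_gcd h1
        have h3 : orderOf ((t : ZMod p)) ∣ a :=
          orderOf_dvd_of_pow_eq_one ((pow_cast_eq_one_iff p t a).mpr hpa)
        have h4 : ((p : ℕ) : ℤ) ∣ t ^ g - 1 := (pow_cast_eq_one_iff p t g).mp
          (orderOf_dvd_iff_pow_eq_one.mp (Nat.dvd_gcd h3 h2))
        exact hpG (Int.natCast_dvd_natCast.mp
          (Int.dvd_coe_gcd (Int.natCast_dvd_natCast.mpr hpe) h4))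
      obtain ⟨j, hjJ, hpj⟩ := hex
      have hcond := h j hjJ
      rw [alphaSeq_gcd] at hcond
      have hajA : alphaSeq e t (Nat.gcd a j) ∣ A := alphaSeq_mono e t (Nat.gcd_dvd_left a j)
      have hpaj : ¬ p ∣ alphaSeq e t (Nat.gcd a j) := by
        intro hd
        exact hpj ((Int.natCast_dvd_natCast.mpr
          (hd.trans (alphaSeq_mono e t (Nat.gcd_dvd_right a j)))).trans
          (alphaSeq_dvd_sub e t j))
      have hsplit : A / alphaSeq e t (Nat.gcd a j) * alphaSeq e t (Nat.gcd a j) = A :=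
        Nat.div_mul_cancel hajA
      have hpm : p ∣ A / alphaSeq e t (Nat.gcd a j) := by
        rcases hp.dvd_mul.mp (show p ∣ A / alphaSeq e t (Nat.gcd a j) * alphaSeq e t (Nat.gcd a j) by rw [hsplit]; exact hpA) with h' | h'
        · exact h'
        · exact absurd h' hpaj
      have hmA : A / alphaSeq e t (Nat.gcd a j) ∣ A := Dvd.intro _ hsplit
      have hme : A / alphaSeq e t (Nat.gcd a j) ∣ e := dvd_trans hmA hAe
      exact hpm.trans ((zmod_natCast_dvd hme b).mp hcond)
    · intro h j hj
      rw [alphaSeq_gcd]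
      have hGaj : G ∣ alphaSeq e t (Nat.gcd a j) := alphaSeq_mono e t
        (Nat.dvd_gcd (Nat.gcd_dvd_left a _)
          ((Nat.gcd_dvd_right a _).trans (Finset.gcd_dvd hj)))
      have hajA : alphaSeq e t (Nat.gcd a j) ∣ A := alphaSeq_mono e t (Nat.gcd_dvd_left a j)
      have hmL : A / alphaSeq e t (Nat.gcd a j) ∣ L :=
        nat_div_dvd_div hajA hGaj (alphaSeq_pos e he t _)
      have hme : A / alphaSeq e t (Nat.gcd a j) ∣ e :=
        dvd_trans (Dvd.intro _ (Nat.div_mul_cancel hajA)) hAe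
      exact (zmod_natCast_dvd hme b).mpr (hmL.trans h)
  have hcard : Nat.card {b : ZMod e // ∀ j ∈ J,
      ((A / Nat.gcd A (alphaSeq e t j) : ℕ) : ZMod e) ∣ b}
      = Nat.card {b : ZMod e // L ∣ b.val} :=
    Nat.card_congr (Equiv.subtypeEquivRight key)
  rw [hcard, card_val_dvd e L he hLe]
  obtain ⟨k, hk⟩ := hAe
  have hLpos : 0 < L := Nat.pos_of_ne_zero fun h0 => by
    rw [h0, zero_mul] at hLG; omega
  have h1 : e / L = G * k := by
    rw [hk, ← hLG, mul_assoc, Nat.mul_div_cancel_left _ hLpos]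
  have h2 : e * G / A = G * k := by
    rw [hk, show A * k * G = A * (G * k) by ring, Nat.mul_div_cancel_left _ hApos]
  rw [h1, h2]
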